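/- Let $\psi : \mathrm{Homeo}_c(\mathbb{R}) \to \mathrm{Homeo}(\mathbb{R})$ be an injective continuous group morphism whose image has no global fixed point, and suppose for every point $x$ the fixed-point set $F_x$ of $\psi(G_x)$ is a single point $h(x)$, with the sets $F_x$ pairwise disjoint. Then the map $h : \mathbb{R} \to \mathbb{R}$, $x \mapsto$ the unique point of $F_x$, is a homeomorphism, and $\psi(f) \circ h = h \circ f$ for every $f \in \mathrm{Homeo}_c(\mathbb{R})$. -/

import Mathlib

noncomputable section

instance instGroupHomeomorph (X : Type) [TopologicalSpace X] : Group (X ≃ₜ X) where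
  mul f g := g.trans f
  one := Homeomorph.refl X
  inv := Homeomorph.symm
  mul_assoc a b c := Homeomorph.ext fun _ => rfl
  one_mul a := Homeomorph.ext fun _ => rfl
  mul_one a := Homeomorph.ext fun _ => rfl
  inv_mul_cancel a := Homeomorph.ext fun x => a.symm_apply_apply x

@[simp] theorem homeo_mul_apply {X : Type} [TopologicalSpace X] (f g : X ≃ₜ X) (x : X) :
    (f * g) x = f (g x) := rfl

/-- The compact-open type topology on the group of homeomorphisms. -/
instance instTopHomeomorph (X Y : Type) [TopologicalSpace X] [TopologicalSpace Y] :
    TopologicalSpace (X ≃ₜ Y) :=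
  TopologicalSpace.induced
    (fun f => ((⟨f, f.continuous⟩ : C(X, Y)), (⟨f.symm, f.symm.continuous⟩ : C(Y, X))))
    inferInstance

/-- The group `Homeo_c(ℝ)` of compactly supported homeomorphisms of the real line,
as a subgroup of the group of homeomorphisms of `ℝ`. -/
def HomeoC : Subgroup (ℝ ≃ₜ ℝ) where
  carrier := {f | ∃ C : Set ℝ, IsCompact C ∧ ∀ x ∉ C, f x = x}
  one_mem' := ⟨∅, isCompact_empty, fun _ _ => rfl⟩
  mul_mem' := by
    rintro a b ⟨C, hC, ha⟩ ⟨D, hD, hb⟩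
    refine ⟨C ∪ D, hC.union hD, fun x hx => ?_⟩
    have hxC : x ∉ C := fun h => hx (Or.inl h)
    have hxD : x ∉ D := fun h => hx (Or.inr h)
    show a (b x) = x
    rw [hb x hxD, ha x hxC]
  inv_mem' := by
    rintro a ⟨C, hC, ha⟩
    exact ⟨C, hC, fun x hx => a.symm_apply_eq.mpr (ha x hx).symm⟩

/-- `g` pointwise fixes a neighbourhood of `A`. -/
def FixesNbhd (g : ℝ ≃ₜ ℝ) (A : Set ℝ) : Prop :=
  ∃ U : Set ℝ, IsOpen U ∧ A ⊆ U ∧ ∀ x ∈ U, g x = x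

/-- The set `F_x` of common fixed points of `ψ(G_x)`. -/
def FixSet (ψ : HomeoC →* (ℝ ≃ₜ ℝ)) (x : ℝ) : Set ℝ :=
  {p | ∀ f : HomeoC, FixesNbhd (f : ℝ ≃ₜ ℝ) {x} → ψ f p = p}

namespace Stmt16Aux

/-- clamp to `[-1/2, 1/2]` -/
def tc (t : ℝ) : ℝ := max (-(1/2)) (min (1/2) t)

lemma tc_le (t : ℝ) : |tc t| ≤ 1/2 := by
  rw [abs_le]
  constructor
  · exact le_max_left _ _
  · exact max_le (by norm_num) (min_le_left _ _)

lemma tc_eq {t : ℝ} (h : |t| ≤ 1/2) : tc t = t := by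
  rw [abs_le] at h
  rw [tc, min_eq_right h.2, max_eq_right h.1]

lemma cont_tc : Continuous tc :=
  continuous_const.max (continuous_const.min continuous_id)

lemma one_add_pos (t : ℝ) : (0:ℝ) < 1 + tc t := by
  have := abs_le.1 (tc_le t); linarith

lemma one_sub_pos (t : ℝ) : (0:ℝ) < 1 - tc t := by
  have := abs_le.1 (tc_le t); linarith

def bump (x u : ℝ) : ℝ := max 0 (min (u - (x-1)) ((x+1) - u))

lemma bump_lip (x u w : ℝ) : |bump x w - bump x u| ≤ |w - u| := by
  unfold bump
  have h1 : |max 0 (min (w - (x-1)) ((x+1) - w)) - max 0 (min (u - (x-1)) ((x+1) - u))| ≤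
      |min (w - (x-1)) ((x+1) - w) - min (u - (x-1)) ((x+1) - u)| := by
    rw [max_comm 0 (min (w - (x-1)) ((x+1) - w)), max_comm 0 (min (u - (x-1)) ((x+1) - u))]
    exact abs_max_sub_max_le_abs _ _ _
  refine h1.trans ((abs_min_sub_min_le_max _ _ _ _).trans ?_)
  apply max_le
  · rw [show w - (x-1) - (u - (x-1)) = w - u by ring]
  · rw [show (x+1) - w - ((x+1) - u) = u - w by ring, abs_sub_comm]

def ffun (x t u : ℝ) : ℝ := u + tc t * bump x u

lemma ffun_strictMono (x t : ℝ) : StrictMono (ffun x t) := by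
  intro u w huw
  unfold ffun
  have hd := bump_lip x u w
  rw [abs_of_pos (sub_pos.2 huw)] at hd
  have hd2 := abs_le.1 hd
  have ht := abs_le.1 (tc_le t)
  nlinarith [mul_nonneg (by linarith : (0:ℝ) ≤ 1/2 - tc t)
      (by linarith : (0:ℝ) ≤ (w - u) - (bump x w - bump x u)),
    mul_nonneg (by linarith : (0:ℝ) ≤ 1/2 + tc t)
      (by linarith : (0:ℝ) ≤ (w - u) + (bump x w - bump x u))]

lemma bump_eq_zero {x u : ℝ} (h : u ∉ Set.Icc (x-1) (x+1)) : bump x u = 0 := by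
  unfold bump
  rw [Set.mem_Icc, not_and_or, not_le, not_le] at h
  rcases h with h | h
  · exact max_eq_left ((min_le_left _ _).trans (by linarith))
  · exact max_eq_left ((min_le_right _ _).trans (by linarith))

def gfun (x t v : ℝ) : ℝ :=
  v - tc t * max 0 (min ((v - (x-1))/(1 + tc t)) (((x+1) - v)/(1 - tc t)))

lemma ffun_gfun (x t v : ℝ) : ffun x t (gfun x t v) = v := by
  have hs := abs_le.1 (tc_le t)
  have h1 : (0:ℝ) < 1 + tc t := one_add_pos t
  have h2 : (0:ℝ) < 1 - tc t := one_sub_pos t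
  set s := tc t with hsdef
  set A := (v - (x-1))/(1+s) with hA
  set B := ((x+1) - v)/(1-s) with hB
  have hgv : gfun x t v = v - s * max 0 (min A B) := rfl
  have hbump : bump x (gfun x t v) = max 0 (min A B) := by
    rw [hgv]
    rcases le_or_gt v (x-1) with hv | hv
    · have hA0 : A ≤ 0 := by
        rw [hA]
        exact div_nonpos_iff.mpr (Or.inr ⟨by linarith, h1.le⟩)
      have hm : max 0 (min A B) = 0 := max_eq_left ((min_le_left _ _).trans hA0)
      rw [hm, mul_zero, sub_zero]
      unfold bump
      exact max_eq_left ((min_le_left _ _).trans (by linarith))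
    rcases le_or_gt (x+1) v with hv' | hv'
    · have hB0 : B ≤ 0 := by
        rw [hB]
        exact div_nonpos_iff.mpr (Or.inr ⟨by linarith, h2.le⟩)
      have hm : max 0 (min A B) = 0 := max_eq_left ((min_le_right _ _).trans hB0)
      rw [hm, mul_zero, sub_zero]
      unfold bump
      exact max_eq_left ((min_le_right _ _).trans (by linarith))
    rcases le_total v (x + s) with hvs | hvs
    · have hA0 : 0 ≤ A := div_nonneg (by linarith) h1.le
      have hAB : A ≤ B := by
        rw [hA, hB, div_le_div_iff₀ h1 h2]; nlinarith
      have hm : max 0 (min A B) = A := by rw [min_eq_left hAB, max_eq_right hA0]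
      rw [hm]
      have hAe : v - (x-1) = A + s * A := by
        rw [hA]; field_simp
      have hu : v - s * A - (x - 1) = A := by linarith
      have hA1 : A ≤ 1 := by rw [hA, div_le_one h1]; linarith
      unfold bump
      rw [hu, show (x+1) - (v - s * A) = 2 - A by linarith,
        min_eq_left (by linarith), max_eq_right hA0]
    · have hB0 : 0 ≤ B := div_nonneg (by linarith) h2.le
      have hBA : B ≤ A := by
        rw [hA, hB, div_le_div_iff₀ h2 h1]; nlinarith
      have hm : max 0 (min A B) = B := by rw [min_eq_right hBA, max_eq_right hB0]
      rw [hm]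
      have hBe : (x+1) - v = B - s * B := by
        rw [hB]; field_simp
      have hu : (x+1) - (v - s * B) = B := by linarith
      have hu2 : v - s * B - (x - 1) = 2 - B := by linarith
      have hB1 : B ≤ 1 := by rw [hB, div_le_one h2]; linarith
      unfold bump
      rw [hu, hu2, min_eq_right (by linarith), max_eq_right hB0]
  show gfun x t v + s * bump x (gfun x t v) = v
  rw [hbump, hgv]; ring

lemma gfun_ffun (x t u : ℝ) : gfun x t (ffun x t u) = u :=
  (ffun_strictMono x t).injective (ffun_gfun x t (ffun x t u))

lemma cont_ffun (x : ℝ) : Continuous fun p : ℝ × ℝ => ffun x p.1 p.2 := by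
  show Continuous fun p : ℝ × ℝ =>
    p.2 + tc p.1 * max 0 (min (p.2 - (x-1)) ((x+1) - p.2))
  exact continuous_snd.add ((cont_tc.comp continuous_fst).mul
    (continuous_const.max ((continuous_snd.sub continuous_const).min
      (continuous_const.sub continuous_snd))))

lemma cont_gfun (x : ℝ) : Continuous fun p : ℝ × ℝ => gfun x p.1 p.2 := by
  show Continuous fun p : ℝ × ℝ =>
    p.2 - tc p.1 * max 0 (min ((p.2 - (x-1))/(1 + tc p.1)) (((x+1) - p.2)/(1 - tc p.1)))
  have hA : Continuous fun p : ℝ × ℝ => (p.2 - (x-1))/(1 + tc p.1) :=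
    (continuous_snd.sub continuous_const).div
      (continuous_const.add (cont_tc.comp continuous_fst)) (fun p => (one_add_pos p.1).ne')
  have hB : Continuous fun p : ℝ × ℝ => ((x+1) - p.2)/(1 - tc p.1) :=
    (continuous_const.sub continuous_snd).div
      (continuous_const.sub (cont_tc.comp continuous_fst)) (fun p => (one_sub_pos p.1).ne')
  exact continuous_snd.sub ((cont_tc.comp continuous_fst).mul
    (continuous_const.max (hA.min hB)))

def flowH (x t : ℝ) : ℝ ≃ₜ ℝ where
  toFun := ffun x t
  invFun := gfun x t
  left_inv := gfun_ffun x t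
  right_inv := ffun_gfun x t
  continuous_toFun :=
    (cont_ffun x).comp (continuous_const.prodMk continuous_id)
  continuous_invFun :=
    (cont_gfun x).comp (continuous_const.prodMk continuous_id)

lemma flowH_mem (x t : ℝ) : flowH x t ∈ HomeoC :=
  ⟨Set.Icc (x-1) (x+1), isCompact_Icc, fun u hu => by
    show ffun x t u = u
    rw [ffun, bump_eq_zero hu, mul_zero, add_zero]⟩

def flow (x t : ℝ) : HomeoC := ⟨flowH x t, flowH_mem x t⟩

lemma flow_apply (x t : ℝ) : ((flow x t : HomeoC) : ℝ ≃ₜ ℝ) x = x + tc t := by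
  show ffun x t x = x + tc t
  rw [ffun, bump, show x - (x-1) = (1:ℝ) by ring, show (x+1) - x = (1:ℝ) by ring]
  norm_num

lemma cont_flow (x : ℝ) : Continuous fun t : ℝ => flow x t := by
  apply Continuous.subtype_mk
  apply continuous_induced_rng.2
  refine Continuous.prodMk ?_ ?_
  · exact ContinuousMap.continuous_of_continuous_uncurry _ (cont_ffun x)
  · exact ContinuousMap.continuous_of_continuous_uncurry _ (cont_gfun x)

end Stmt16Aux

open Stmt16Aux in
/-- If each `F_x` is the single point `{h x}` and the `F_x` are pairwise disjoint, then
`h` is a homeomorphism of `ℝ` and `ψ(f) ∘ h = h ∘ f` for every `f ∈ Homeo_c(ℝ)`. -/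
theorem stmt16 (ψ : HomeoC →* (ℝ ≃ₜ ℝ)) (hinj : Function.Injective ψ)
    (hcont : Continuous ψ)
    (hnofix : ¬ ∃ p : ℝ, ∀ f : HomeoC, ψ f p = p)
    (h : ℝ → ℝ) (hsingle : ∀ x : ℝ, FixSet ψ x = {h x})
    (hdisj : ∀ x y : ℝ, x ≠ y → Disjoint (FixSet ψ x) (FixSet ψ y)) :
    IsHomeomorph h ∧ ∀ (f : HomeoC) (x : ℝ), ψ f (h x) = h ((f : ℝ ≃ₜ ℝ) x) := by
  have hmem : ∀ x : ℝ, h x ∈ FixSet ψ x := fun x => by rw [hsingle x]; rfl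
  -- equivariance
  have hequiv : ∀ (f : HomeoC) (x : ℝ), ψ f (h x) = h ((f : ℝ ≃ₜ ℝ) x) := by
    intro f x
    have hmem' : ψ f (h x) ∈ FixSet ψ ((f : ℝ ≃ₜ ℝ) x) := by
      intro g hg
      obtain ⟨U, hUo, hxU, hUfix⟩ := hg
      have hfx : (f : ℝ ≃ₜ ℝ) x ∈ U := hxU rfl
      have hg'fix : FixesNbhd ((f⁻¹ * g * f : HomeoC) : ℝ ≃ₜ ℝ) {x} := by
        refine ⟨(f : ℝ ≃ₜ ℝ) ⁻¹' U, hUo.preimage (f : ℝ ≃ₜ ℝ).continuous,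
          by simpa using hfx, ?_⟩
        intro u hu
        show ((f⁻¹ * g * f : HomeoC) : ℝ ≃ₜ ℝ) u = u
        rw [Subgroup.coe_mul, Subgroup.coe_mul, Subgroup.coe_inv,
          homeo_mul_apply, homeo_mul_apply, hUfix _ hu]
        exact (f : ℝ ≃ₜ ℝ).symm_apply_apply u
      have h1 : ψ (f⁻¹ * g * f) (h x) = h x := hmem x (f⁻¹ * g * f) hg'fix
      have h2 : g * f = f * (f⁻¹ * g * f) := by group
      calc ψ g (ψ f (h x)) = ψ (g * f) (h x) := by rw [map_mul]; rfl
        _ = ψ (f * (f⁻¹ * g * f)) (h x) := by rw [← h2]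
        _ = ψ f (ψ (f⁻¹ * g * f) (h x)) := by rw [map_mul]; rfl
        _ = ψ f (h x) := by rw [h1]
    rw [hsingle ((f : ℝ ≃ₜ ℝ) x)] at hmem'
    exact hmem'
  -- injectivity of h
  have hinjh : Function.Injective h := by
    intro a b hab
    by_contra hne
    exact Set.disjoint_left.1 (hdisj a b hne) (hmem a) (by rw [hab]; exact hmem b)
  -- each ψ f is strictly monotone
  have hmono : ∀ f : HomeoC, StrictMono ⇑(ψ f) := by
    intro f
    rcases (ψ f).continuous.strictMono_of_inj (ψ f).injective with hm | ha
    · exact hm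
    exfalso
    obtain ⟨C, hC, hCf⟩ : ∃ C : Set ℝ, IsCompact C ∧ ∀ u ∉ C, (f : ℝ ≃ₜ ℝ) u = u := f.2
    obtain ⟨M, hM⟩ := hC.bddAbove
    have fix : ∀ y : ℝ, M < y → ψ f (h y) = h y := by
      intro y hy
      refine hmem y f ⟨Set.Ioi M, isOpen_Ioi, by simpa using hy, fun u hu => ?_⟩
      exact hCf u (fun hc => absurd (hM hc) (not_le.2 hu))
    have h1 := fix (M+1) (by linarith)
    have h2 := fix (M+2) (by linarith)
    have hne : h (M+1) ≠ h (M+2) := fun e => by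
      have := hinjh e; norm_num at this
    rcases hne.lt_or_gt with hlt | hlt
    · have := ha hlt; rw [h1, h2] at this; exact absurd hlt (not_lt.2 this.le)
    · have := ha hlt; rw [h1, h2] at this; exact absurd hlt (not_lt.2 this.le)
  -- continuity of h
  have hconth : Continuous h := by
    rw [continuous_iff_continuousAt]
    intro x
    have c1 : Continuous fun t : ℝ => (ψ (flow x t)) (h x) := by
      have e0 : Continuous fun t : ℝ => ψ (flow x t) := hcont.comp (cont_flow x)
      have e1 : Continuous (fun e : ℝ ≃ₜ ℝ => (⟨e, e.continuous⟩ : C(ℝ, ℝ))) := by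
        have e1' : Continuous (fun f : ℝ ≃ₜ ℝ =>
            ((⟨f, f.continuous⟩ : C(ℝ, ℝ)), (⟨f.symm, f.symm.continuous⟩ : C(ℝ, ℝ)))) :=
          continuous_induced_dom
        exact e1'.fst
      have e2 : Continuous fun f : C(ℝ, ℝ) => f (h x) := continuous_eval_const (h x)
      exact e2.comp (e1.comp e0)
    have key : ∀ t : ℝ, (ψ (flow x t)) (h x) = h (x + tc t) := fun t =>
      (hequiv (flow x t) x).trans (congrArg h (flow_apply x t))
    have c2 : ContinuousAt (fun y : ℝ => (ψ (flow x (y - x))) (h x)) x :=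
      (c1.comp (continuous_id.sub continuous_const)).continuousAt
    refine c2.congr ?_
    refine Filter.eventuallyEq_of_mem (Ioo_mem_nhds (by linarith : x - 1/2 < x)
      (by linarith : x < x + 1/2)) ?_
    intro y hy
    obtain ⟨hy1, hy2⟩ := hy
    show (ψ (flow x (y - x))) (h x) = h y
    have habs : |y - x| ≤ 1/2 := abs_le.2 ⟨by linarith, by linarith⟩
    rw [key (y - x), tc_eq habs]
    congr 1
    ring
  -- image of the range under ψ f
  have hrange : ∀ f : HomeoC, ψ f '' Set.range h = Set.range h := by
    intro f
    ext y
    constructor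
    · rintro ⟨-, ⟨z, rfl⟩, rfl⟩
      exact ⟨(f : ℝ ≃ₜ ℝ) z, (hequiv f z).symm⟩
    · rintro ⟨z, rfl⟩
      refine ⟨h ((f : ℝ ≃ₜ ℝ).symm z), ⟨_, rfl⟩, ?_⟩
      rw [hequiv f ((f : ℝ ≃ₜ ℝ).symm z), (f : ℝ ≃ₜ ℝ).apply_symm_apply]
  -- range h is unbounded
  have hbddA : ¬ BddAbove (Set.range h) := by
    intro hb
    refine hnofix ⟨sSup (Set.range h), fun f => ?_⟩
    have := (hmono f).monotone.map_csSup_of_continuousAt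
      ((ψ f).continuous.continuousAt) (Set.range_nonempty h) hb
    rw [this, hrange f]
  have hbddB : ¬ BddBelow (Set.range h) := by
    intro hb
    refine hnofix ⟨sInf (Set.range h), fun f => ?_⟩
    have := (hmono f).monotone.map_csInf_of_continuousAt
      ((ψ f).continuous.continuousAt) (Set.range_nonempty h) hb
    rw [this, hrange f]
  -- surjectivity of h
  have hsurjh : Function.Surjective h := by
    intro q
    obtain ⟨y1, ⟨a1, rfl⟩, hy1⟩ := not_bddAbove_iff.1 hbddA q
    obtain ⟨y2, ⟨a2, rfl⟩, hy2⟩ := not_bddBelow_iff.1 hbddB q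
    exact intermediate_value_univ a2 a1 hconth ⟨hy2.le, hy1.le⟩
  -- h is a homeomorphism
  refine ⟨?_, hequiv⟩
  rcases hconth.strictMono_of_inj hinjh with hm | ha
  · exact isHomeomorph_iff_exists_homeomorph.2
      ⟨(StrictMono.orderIsoOfSurjective h hm hsurjh).toHomeomorph, rfl⟩
  · have hm' : StrictMono (fun y : ℝ => -(h y)) := fun a b hab => neg_lt_neg (ha hab)
    have hs' : Function.Surjective (fun y : ℝ => -(h y)) := by
      intro q
      obtain ⟨a, ha'⟩ := hsurjh (-q)
      exact ⟨a, by show -(h a) = q; rw [ha', neg_neg]⟩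
    have hiso : IsHomeomorph (fun y : ℝ => -(h y)) :=
      isHomeomorph_iff_exists_homeomorph.2
        ⟨(StrictMono.orderIsoOfSurjective _ hm' hs').toHomeomorph, rfl⟩
    have : h = (fun y : ℝ => -y) ∘ (fun y : ℝ => -(h y)) := funext fun y => (neg_neg _).symm
    rw [this]
    exact (Homeomorph.neg ℝ).isHomeomorph.comp hiso
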